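/- Let X be a set, T a bounded operator on ℓ²(X), and ω a countably incomplete ultrafilter on I, with T^ω the induced operator on the metric ultrapower (ℓ²(X))^ω. Then ℓ²(X^ω) (embedded in (ℓ²(X))^ω via δ_{[x_i]} ↦ [δ_{x_i}]) is an invariant subspace of T^ω if and only if: for every ε > 0 there exists M > 0 such that for every x ∈ X there is v ∈ ℓ²(X) with #supp(v) ≤ M and ‖Tδ_x − v‖ < ε. -/

import Mathlib

noncomputable section
open scoped ENNReal
open Filter

/-- The Hilbert space ℓ²(X). -/
abbrev L2 (X : Type*) := lp (fun _ : X => ℂ) 2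

/-- The Dirac function δ_x ∈ ℓ²(X). -/
noncomputable def dirac {X : Type*} (x : X) : L2 X := by
  classical exact lp.single 2 x 1

lemma dirac_apply_self {X : Type*} (x : X) : (dirac x : ∀ _ : X, ℂ) x = 1 := by
  classical exact lp.single_apply_self 2 x 1

lemma dirac_apply_ne {X : Type*} {x y : X} (h : y ≠ x) : (dirac x : ∀ _ : X, ℂ) y = 0 := by
  classical exact lp.single_apply_ne 2 x 1 h

lemma dirac_norm {X : Type*} (x : X) : ‖dirac x‖ = 1 := by
  classical
  have h := lp.norm_single (p := 2) (E := fun _ : X => ℂ) (by norm_num) x (1:ℂ)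
  simpa [dirac] using h

lemma apply_le_norm {X : Type*} (v : L2 X) (y : X) : ‖(v : ∀ _ : X, ℂ) y‖ ≤ ‖v‖ :=
  lp.norm_apply_le_norm (by norm_num) v y

lemma eq_sum_dirac {X : Type*} (v : L2 X) (s : Finset X)
    (hs : ∀ y ∉ s, (v : ∀ _ : X, ℂ) y = 0) :
    v = ∑ y ∈ s, (v : ∀ _ : X, ℂ) y • dirac y := by
  classical
  refine lp.ext (funext fun z => ?_)
  rw [lp.coeFn_sum]
  simp only [Finset.sum_apply, Pi.smul_apply, lp.coeFn_smul, smul_eq_mul]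
  by_cases hz : z ∈ s
  · rw [Finset.sum_eq_single z (fun y _ hy => by rw [dirac_apply_ne (Ne.symm hy), mul_zero])
      (fun h => absurd hz h), dirac_apply_self, mul_one]
  · rw [hs z hz, Finset.sum_eq_zero]
    intro y hy
    rw [dirac_apply_ne (by rintro rfl; exact hz hy), mul_zero]

lemma repr_lemma {X : Type*} [Inhabited X] {M : ℕ} (v : L2 X) (s : Finset X)
    (hs : ∀ y ∉ s, (v : ∀ _ : X, ℂ) y = 0) (hcard : s.card ≤ M) :
    ∃ (e : Fin M → X) (c : Fin M → ℂ), (∀ j, ‖c j‖ ≤ ‖v‖) ∧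
      v = ∑ j : Fin M, c j • dirac (e j) := by
  classical
  let g : s ↪ Fin M := s.equivFin.toEmbedding.trans (Fin.castLEEmb hcard)
  let e : Fin M → X := fun j => if h : ∃ y : s, g y = j then (h.choose : X) else default
  let c : Fin M → ℂ := fun j => if h : ∃ y : s, g y = j then v (h.choose : X) else 0
  have key : ∀ j : Fin M, c j • dirac (e j)
      = if h : ∃ y : s, g y = j then ((v : ∀ _ : X, ℂ) (h.choose : X)) • dirac (h.choose : X)
        else 0 := by
    intro j
    by_cases h : ∃ y : s, g y = j
    · simp only [c, e, dif_pos h]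
    · simp only [c, e, dif_neg h, zero_smul]
  refine ⟨e, c, fun j => ?_, ?_⟩
  · by_cases h : ∃ y : s, g y = j
    · simp only [c, dif_pos h]; exact apply_le_norm v _
    · simp only [c, dif_neg h, norm_zero]; exact norm_nonneg v
  · rw [eq_sum_dirac v s hs]
    calc ∑ y ∈ s, (v : ∀ _ : X, ℂ) y • dirac y
        = ∑ y : s, (v : ∀ _ : X, ℂ) (y : X) • dirac (y : X) := (Finset.sum_coe_sort s _).symm
      _ = ∑ y : s, c (g y) • dirac (e (g y)) := by
          refine Finset.sum_congr rfl fun y _ => ?_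
          have h : ∃ y' : s, g y' = g y := ⟨y, rfl⟩
          have hy : h.choose = y := g.injective h.choose_spec
          rw [key (g y), dif_pos h, hy]
      _ = ∑ j ∈ Finset.univ.map g, c j • dirac (e j) := (Finset.sum_map Finset.univ g (fun j => c j • dirac (e j))).symm
      _ = ∑ j : Fin M, c j • dirac (e j) := by
          refine Finset.sum_subset (Finset.subset_univ _) fun j _ hj => ?_
          rw [key j, dif_neg]
          intro ⟨y, hy⟩
          exact hj (Finset.mem_map.2 ⟨y, Finset.mem_univ y, hy⟩)

lemma comb_support {X : Type*} {n : ℕ} (a : Fin n → ℂ) (xk : Fin n → X) (y : X)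
    (hy : ∀ k, y ≠ xk k) :
    (∑ k : Fin n, a k • dirac (xk k) : L2 X) y = 0 := by
  rw [lp.coeFn_sum]
  simp only [Finset.sum_apply, lp.coeFn_smul, Pi.smul_apply, smul_eq_mul]
  exact Finset.sum_eq_zero fun k _ => by rw [dirac_apply_ne (hy k), mul_zero]


/-- Membership of (the germ of) a bounded family v : I → ℓ²(X) in the subspace
ℓ²(X^ω) of the metric ultrapower (ℓ²(X))^ω: v is ω-approximable by finite linear
combinations of the germ Dirac vectors [δ_{x_i}]. -/
def MemL2Ultrapower {X I : Type*} (ω : Ultrafilter I) (v : I → L2 X) : Prop :=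
  ∀ ε : ℝ, 0 < ε → ∃ (n : ℕ) (x : Fin n → I → X) (a : Fin n → ℂ),
    ∀ᶠ i in (ω : Filter I), ‖v i - ∑ k : Fin n, a k • dirac (x k i)‖ ≤ ε

lemma forward_dir {X I : Type*} (ω : Ultrafilter I)
    (hCI : ∃ In : ℕ → Set I, (⋃ n, In n) = Set.univ ∧ Pairwise (Function.onFun Disjoint In) ∧
      ∀ n, In n ∉ ω)
    (T : L2 X →L[ℂ] L2 X)
    (hInv : ∀ v : I → L2 X, (∃ C : ℝ, ∀ i, ‖v i‖ ≤ C) → MemL2Ultrapower ω v →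
      MemL2Ultrapower ω (fun i => T (v i))) :
    ∀ ε : ℝ, 0 < ε → ∃ M : ℕ, ∀ x : X, ∃ v : L2 X,
      (∃ s : Finset X, s.card ≤ M ∧ ∀ y ∉ s, v y = 0) ∧ ‖T (dirac x) - v‖ < ε := by
  classical
  intro ε hε
  by_contra hcon
  push_neg at hcon
  choose xb hxb using hcon
  obtain ⟨In, hUnion, -, hIn⟩ := hCI
  have hg : ∀ i : I, ∃ n, i ∈ In n := fun i => by
    have h := Set.mem_univ i
    rw [← hUnion] at h
    exact Set.mem_iUnion.mp h
  choose g hgIn using hg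
  set v : I → L2 X := fun i => dirac (xb (g i)) with hv
  have hmem : MemL2Ultrapower ω v := by
    intro δ hδ
    refine ⟨1, fun _ i => xb (g i), fun _ => 1, Eventually.of_forall fun i => ?_⟩
    simp only [hv, Fin.sum_univ_one, one_smul, sub_self, norm_zero]
    exact hδ.le
  obtain ⟨n, x, a, hEv⟩ := hInv v ⟨1, fun i => (dirac_norm _).le⟩ hmem (ε/2) (by positivity)
  have hHigh : ∀ᶠ i in (ω : Filter I), ∀ m ∈ Finset.range n, g i ≠ m := by
    rw [Filter.eventually_all_finset]
    intro m _
    have h1 : {i | g i = m} ∉ ω := fun hmem' =>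
      hIn m (ω.mem_of_superset hmem' fun i (hi : g i = m) => hi ▸ hgIn i)
    have := (Ultrafilter.compl_mem_iff_notMem (f := ω)).2 h1
    exact this
  obtain ⟨i, hi1, hi2⟩ := (hEv.and hHigh).exists
  have hnm : n ≤ g i := by
    by_contra h
    exact hi2 (g i) (Finset.mem_range.2 (Nat.lt_of_not_le h)) rfl
  have hb := hxb (g i) (∑ k : Fin n, a k • dirac (x k i))
    ⟨Finset.image (fun k => x k i) Finset.univ,
      le_trans (Finset.card_image_le.trans (by simp)) hnm,
      fun y hy => comb_support a (fun k => x k i) y fun k hk =>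
        hy (Finset.mem_image.2 ⟨k, Finset.mem_univ k, hk.symm⟩)⟩
  have : ‖T (v i) - ∑ k : Fin n, a k • dirac (x k i)‖ ≤ ε / 2 := hi1
  rw [hv] at this
  linarith [hb]

lemma arith1 (opN ε : ℝ) (h0 : 0 ≤ opN) (hε : 0 ≤ ε) :
    opN * (ε / (3 * (opN + 1))) ≤ ε / 3 := by
  have h1 : opN * (ε / (3 * (opN + 1))) = ε * opN / (3 * (opN + 1)) := by ring
  rw [h1, div_le_div_iff₀ (by positivity) (by norm_num)]
  nlinarith

lemma arith2 (A ε : ℝ) (hA : A ≠ 0) : A * (ε / (3 * A)) = ε / 3 := by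
  field_simp

lemma arith3 (A m ε : ℝ) (hA : A ≠ 0) (hm : m ≠ 0) :
    A * (m * (ε / (3 * A * m))) = ε / 3 := by
  field_simp

lemma backward_dir {X I : Type*} (ω : Ultrafilter I) (T : L2 X →L[ℂ] L2 X)
    (hT : ∀ ε : ℝ, 0 < ε → ∃ M : ℕ, ∀ x : X, ∃ v : L2 X,
      (∃ s : Finset X, s.card ≤ M ∧ ∀ y ∉ s, v y = 0) ∧ ‖T (dirac x) - v‖ < ε) :
    ∀ v : I → L2 X, (∃ C : ℝ, ∀ i, ‖v i‖ ≤ C) → MemL2Ultrapower ω v →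
      MemL2Ultrapower ω (fun i => T (v i)) := by
  classical
  intro v _ hv ε hε
  by_cases hX : IsEmpty X
  · haveI hsub : Subsingleton (L2 X) := ⟨fun f g => lp.ext (funext fun z => hX.elim z)⟩
    refine ⟨0, fun k => k.elim0, fun k => k.elim0, Eventually.of_forall fun i => ?_⟩
    have h0 : T (v i) = 0 := Subsingleton.elim _ _
    simp [h0, hε.le]
  haveI : Nonempty X := not_isEmpty_iff.mp hX
  inhabit X
  set opN := ‖T‖ with hopN
  have hopN0 : (0:ℝ) ≤ opN := norm_nonneg T
  set δ := ε / (3 * (opN + 1)) with hδdef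
  have hδ : 0 < δ := by positivity
  obtain ⟨n, x, a, hE1⟩ := hv δ hδ
  set A := (∑ k : Fin n, ‖a k‖) + 1 with hAdef
  have hA0 : 0 < A := by positivity
  have hAsum : ∑ k : Fin n, ‖a k‖ ≤ A := by
    rw [hAdef]; linarith
  set ε' := ε / (3 * A) with hε'def
  have hε' : 0 < ε' := by positivity
  obtain ⟨M0, hM0⟩ := hT ε' hε'
  set M := M0 + 1 with hMdef
  have hMpos : (0:ℝ) < (M : ℝ) := by exact_mod_cast Nat.succ_pos M0
  set R := opN + ε' with hRdef
  set η := ε / (3 * A * M) with hηdef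
  have hη0 : 0 < η := by
    apply div_pos hε
    positivity
  obtain ⟨t, -, htfin, htcover⟩ := (isCompact_closedBall (0:ℂ) R).finite_cover_balls hη0
  set t' : Set ℂ := insert 0 t with ht'def
  have ht'fin : t'.Finite := htfin.insert 0
  haveI : Finite t' := ht'fin.to_subtype
  have hnet : ∀ z : ℂ, ‖z‖ ≤ R → ∃ g ∈ t', ‖z - g‖ ≤ η := by
    intro z hz
    have hzb : z ∈ Metric.closedBall (0:ℂ) R := by
      simpa [Metric.mem_closedBall, dist_zero_right] using hz
    obtain ⟨g, hg, hzg⟩ := Set.mem_iUnion₂.mp (htcover hzb)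
    refine ⟨g, Set.mem_insert_of_mem _ hg, ?_⟩
    have := Metric.mem_ball.mp hzg
    rw [dist_eq_norm] at this
    exact this.le
  have hρex : ∀ z : ℂ, ∃ g : t', ‖z‖ ≤ R → ‖z - (g:ℂ)‖ ≤ η := by
    intro z
    by_cases hz : ‖z‖ ≤ R
    · obtain ⟨g, hg, h2⟩ := hnet z hz
      exact ⟨⟨g, hg⟩, fun _ => h2⟩
    · exact ⟨⟨0, Set.mem_insert 0 t⟩, fun h => absurd h hz⟩
  choose ρ hρ using hρex
  choose w hwsupp hwdist using hM0
  choose sfin hscard hssupp using hwsupp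
  have hwnorm : ∀ z : X, ‖w z‖ ≤ R := by
    intro z
    have h1 : ‖w z‖ ≤ ‖T (dirac z)‖ + ‖T (dirac z) - w z‖ := by
      calc ‖w z‖ = ‖T (dirac z) - (T (dirac z) - w z)‖ := by congr 1; abel
        _ ≤ ‖T (dirac z)‖ + ‖T (dirac z) - w z‖ := norm_sub_le _ _
    have h2 : ‖T (dirac z)‖ ≤ opN := by
      calc ‖T (dirac z)‖ ≤ ‖T‖ * ‖dirac z‖ := T.le_opNorm _
        _ = opN := by rw [dirac_norm, mul_one]
    have h3 := (hwdist z).le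
    rw [hRdef]
    linarith
  choose e c hcbound hrepr using fun z : X => repr_lemma (w z) (sfin z) (hssupp z)
    ((hscard z).trans (Nat.le_succ M0))
  have hcR : ∀ (z : X) (j : Fin M), ‖c z j‖ ≤ R := fun z j => (hcbound z j).trans (hwnorm z)
  set Φ : I → (Fin n × Fin M → t') := fun i kj => ρ (c (x kj.1 i) kj.2) with hΦdef
  obtain ⟨b, hb⟩ := Ultrafilter.eq_pure_of_finite (ω.map Φ)
  have hS : ∀ᶠ i in (ω : Filter I), Φ i = b := by
    have hmem : {b} ∈ ω.map Φ := by rw [hb]; exact Ultrafilter.mem_pure.2 rfl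
    rw [Ultrafilter.mem_map] at hmem
    exact Filter.mem_of_superset hmem fun i hi => hi
  refine ⟨n * M, fun p i => e (x (finProdFinEquiv.symm p).1 i) (finProdFinEquiv.symm p).2,
    fun p => a (finProdFinEquiv.symm p).1 * ((b (finProdFinEquiv.symm p)) : ℂ), ?_⟩
  filter_upwards [hE1, hS] with i hi1 hi2
  set u := ∑ k : Fin n, a k • dirac (x k i) with hu
  set W := ∑ k : Fin n, a k • w (x k i) with hW
  set Dfin := ∑ k : Fin n, a k • ∑ j : Fin M, ((b (k, j)) : ℂ) • dirac (e (x k i) j) with hDfin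
  have hsum : ∑ p : Fin (n*M), (a (finProdFinEquiv.symm p).1 * ((b (finProdFinEquiv.symm p)) : ℂ))
      • dirac (e (x (finProdFinEquiv.symm p).1 i) (finProdFinEquiv.symm p).2) = Dfin := by
    rw [hDfin]
    have h1 : ∑ p : Fin (n*M), (a (finProdFinEquiv.symm p).1 * ((b (finProdFinEquiv.symm p)) : ℂ))
        • dirac (e (x (finProdFinEquiv.symm p).1 i) (finProdFinEquiv.symm p).2)
        = ∑ q : Fin n × Fin M, (a q.1 * ((b q) : ℂ)) • dirac (e (x q.1 i) q.2) :=
      Fintype.sum_equiv finProdFinEquiv.symm _ _ fun p => rfl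
    rw [h1, Fintype.sum_prod_type]
    refine Finset.sum_congr rfl fun k _ => ?_
    rw [Finset.smul_sum]
    refine Finset.sum_congr rfl fun j _ => ?_
    rw [mul_smul]
  rw [hsum]
  -- term 1
  have hterm1 : ‖T (v i) - T u‖ ≤ opN * δ := by
    rw [← map_sub]
    calc ‖T (v i - u)‖ ≤ ‖T‖ * ‖v i - u‖ := T.le_opNorm _
      _ ≤ opN * δ := mul_le_mul_of_nonneg_left hi1 hopN0
  -- term 2
  have hTu : T u = ∑ k : Fin n, a k • T (dirac (x k i)) := by
    rw [hu, map_sum]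
    exact Finset.sum_congr rfl fun k _ => by rw [map_smul]
  have hterm2 : ‖T u - W‖ ≤ A * ε' := by
    rw [hTu, hW, ← Finset.sum_sub_distrib]
    have h1 : ∀ k : Fin n, a k • T (dirac (x k i)) - a k • w (x k i)
        = a k • (T (dirac (x k i)) - w (x k i)) := fun k => by rw [smul_sub]
    calc ‖∑ k : Fin n, (a k • T (dirac (x k i)) - a k • w (x k i))‖
        ≤ ∑ k : Fin n, ‖a k • T (dirac (x k i)) - a k • w (x k i)‖ := norm_sum_le _ _
      _ ≤ ∑ k : Fin n, ‖a k‖ * ε' := by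
          refine Finset.sum_le_sum fun k _ => ?_
          rw [h1 k, norm_smul]
          exact mul_le_mul_of_nonneg_left (hwdist (x k i)).le (norm_nonneg _)
      _ = (∑ k : Fin n, ‖a k‖) * ε' := by rw [Finset.sum_mul]
      _ ≤ A * ε' := mul_le_mul_of_nonneg_right hAsum hε'.le
  -- term 3
  have hterm3 : ‖W - Dfin‖ ≤ A * (M * η) := by
    rw [hW, hDfin, ← Finset.sum_sub_distrib]
    have hper : ∀ k : Fin n, ‖w (x k i) - ∑ j : Fin M, ((b (k, j)) : ℂ) • dirac (e (x k i) j)‖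
        ≤ M * η := by
      intro k
      rw [hrepr (x k i), ← Finset.sum_sub_distrib]
      have h2 : ∀ j : Fin M, c (x k i) j • dirac (e (x k i) j)
          - ((b (k, j)) : ℂ) • dirac (e (x k i) j)
          = (c (x k i) j - ((b (k, j)) : ℂ)) • dirac (e (x k i) j) := fun j => by
        rw [sub_smul]
      calc ‖∑ j : Fin M, (c (x k i) j • dirac (e (x k i) j)
            - ((b (k, j)) : ℂ) • dirac (e (x k i) j))‖
          ≤ ∑ j : Fin M, ‖c (x k i) j • dirac (e (x k i) j)
            - ((b (k, j)) : ℂ) • dirac (e (x k i) j)‖ := norm_sum_le _ _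
        _ ≤ ∑ _j : Fin M, η := by
            refine Finset.sum_le_sum fun j _ => ?_
            rw [h2 j, norm_smul, dirac_norm, mul_one]
            have hbj : ((b (k, j)) : ℂ) = ((ρ (c (x k i) j)) : ℂ) := by
              rw [← hi2]
            rw [hbj]
            exact hρ (c (x k i) j) (hcR (x k i) j)
        _ = M * η := by rw [Finset.sum_const, Finset.card_univ, Fintype.card_fin, nsmul_eq_mul]
    calc ‖∑ k : Fin n, (a k • w (x k i)
          - a k • ∑ j : Fin M, ((b (k, j)) : ℂ) • dirac (e (x k i) j))‖
        ≤ ∑ k : Fin n, ‖a k • w (x k i)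
          - a k • ∑ j : Fin M, ((b (k, j)) : ℂ) • dirac (e (x k i) j)‖ := norm_sum_le _ _
      _ ≤ ∑ k : Fin n, ‖a k‖ * (M * η) := by
          refine Finset.sum_le_sum fun k _ => ?_
          rw [← smul_sub, norm_smul]
          exact mul_le_mul_of_nonneg_left (hper k) (norm_nonneg _)
      _ = (∑ k : Fin n, ‖a k‖) * (M * η) := by rw [Finset.sum_mul]
      _ ≤ A * (M * η) := mul_le_mul_of_nonneg_right hAsum (by positivity)
  -- arithmetic
  have hδ' := hδ
  have hA0' := hA0
  have hMpos' := hMpos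
  have hδval : δ * (3 * (opN + 1)) = ε := by
    rw [hδdef]
    exact div_mul_cancel₀ ε (by positivity)
  have hε'val : ε' * (3 * A) = ε := by
    rw [hε'def]
    exact div_mul_cancel₀ ε (by positivity)
  have hηval : η * (3 * A * (M:ℝ)) = ε := by
    rw [hηdef]
    exact div_mul_cancel₀ ε (by positivity)
  clear_value opN δ A ε' R η
  have harith1 : opN * δ ≤ ε / 3 := by
    rw [hδdef]; exact arith1 opN ε hopN0 hε.le
  have harith2 : A * ε' = ε / 3 := by
    rw [hε'def]; exact arith2 A ε hA0.ne'
  have harith3 : A * ((M:ℝ) * η) = ε / 3 := by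
    rw [hηdef]; exact arith3 A (M:ℝ) ε hA0.ne' hMpos.ne'
  have htri := dist_triangle4 (T (v i)) (T u) W Dfin
  rw [dist_eq_norm, dist_eq_norm, dist_eq_norm, dist_eq_norm] at htri
  show ‖T (v i) - Dfin‖ ≤ ε
  calc ‖T (v i) - Dfin‖ ≤ ‖T (v i) - T u‖ + ‖T u - W‖ + ‖W - Dfin‖ := htri
    _ ≤ opN * δ + A * ε' + A * ((M:ℝ) * η) :=
        add_le_add (add_le_add hterm1 hterm2) hterm3
    _ ≤ ε / 3 + ε / 3 + ε / 3 := by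
        rw [harith2, harith3]
        exact add_le_add (add_le_add harith1 le_rfl) le_rfl
    _ = ε := by ring


/-- For a countably incomplete ultrafilter ω, the subspace ℓ²(X^ω) of the
metric ultrapower (ℓ²(X))^ω is invariant under T^ω if and only if T has the uniform
finite-approximation property: for each ε > 0 there is M such that every Tδ_x is within
ε of a vector supported on at most M points. -/
theorem l2Ultrapower_invariant_iff_uniform_approx {X I : Type*} (ω : Ultrafilter I)
    (hCI : ∃ In : ℕ → Set I, (⋃ n, In n) = Set.univ ∧ Pairwise (Function.onFun Disjoint In) ∧
      ∀ n, In n ∉ ω)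
    (T : L2 X →L[ℂ] L2 X) :
    (∀ v : I → L2 X, (∃ C : ℝ, ∀ i, ‖v i‖ ≤ C) → MemL2Ultrapower ω v →
      MemL2Ultrapower ω (fun i => T (v i))) ↔
    (∀ ε : ℝ, 0 < ε → ∃ M : ℕ, ∀ x : X, ∃ v : L2 X,
      (∃ s : Finset X, s.card ≤ M ∧ ∀ y ∉ s, v y = 0) ∧ ‖T (dirac x) - v‖ < ε) :=
  ⟨fun h => forward_dir ω hCI T h, fun h => backward_dir ω T h⟩
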